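/- For all integers d ≥ 2, n ≥ 1 and 1 ≤ r ≤ n, the inequality C(n+d−2, d−1)·(n−r+1) + C(r+d−2, d) ≥ C(n+d−1, d) holds, with equality when r = n. (Here C(a,b) denotes the binomial coefficient.) In other words, the Singleton-like bound C(n+d−1,d) − C(r+d−2,d) for essential-rank-metric codes is never worse than the bound C(n+d−2,d−1)(n−r+1) inherited from rank-metric codes. -/
import Mathlib

lemma singleton_aux (s e m : ℕ) :
    Nat.choose (s + m + e + 2) (e + 2) ≤
      Nat.choose (s + m + e + 1) (e + 1) * (m + 1) + Nat.choose (s + e + 1) (e + 2) := by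
  induction m with
  | zero =>
      have key : (s + e + 1 + 1).choose (e + 2) =
          (s + e + 1).choose (e + 1) + (s + e + 1).choose (e + 2) :=
        Nat.choose_succ_succ _ _
      have h : s + 0 + e + 2 = (s + e + 1) + 1 := by ring
      have h' : s + 0 + e + 1 = s + e + 1 := by ring
      rw [h, h', key]
      omega
  | succ m ih =>
      have h : s + (m + 1) + e + 2 = (s + m + e + 2) + 1 := by ring
      have h2 : s + (m + 1) + e + 1 = s + m + e + 2 := by ring
      rw [h, h2, Nat.choose_succ_succ]
      have h1 : Nat.choose (s + m + e + 1) (e + 1) ≤ Nat.choose (s + m + e + 2) (e + 1) :=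
        Nat.choose_le_choose _ (by omega)
      calc Nat.choose (s + m + e + 2) (e + 1) + Nat.choose (s + m + e + 2) (e + 2)
          ≤ Nat.choose (s + m + e + 2) (e + 1) +
            (Nat.choose (s + m + e + 1) (e + 1) * (m + 1) + Nat.choose (s + e + 1) (e + 2)) :=
            Nat.add_le_add_left ih _
        _ ≤ Nat.choose (s + m + e + 2) (e + 1) +
            (Nat.choose (s + m + e + 2) (e + 1) * (m + 1) + Nat.choose (s + e + 1) (e + 2)) := by
            gcongr
        _ = Nat.choose (s + m + e + 2) (e + 1) * (m + 1 + 1) + Nat.choose (s + e + 1) (e + 2) := by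
            ring

/-- For `d ≥ 2`, `n ≥ 1` and `1 ≤ r ≤ n` we have
`C(n+d-2, d-1)·(n-r+1) + C(r+d-2, d) ≥ C(n+d-1, d)`, with equality when `r = n`.
That is, the Singleton-like bound for essential-rank-metric codes is never worse than the
bound inherited from rank-metric codes. -/
theorem singleton_bound_comparison
    (n d r : ℕ) (hd : 2 ≤ d) (hn : 1 ≤ n) (hr1 : 1 ≤ r) (hrn : r ≤ n) :
    Nat.choose (n + d - 1) d ≤
      Nat.choose (n + d - 2) (d - 1) * (n - r + 1) + Nat.choose (r + d - 2) d ∧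
    (r = n →
      Nat.choose (n + d - 2) (d - 1) * (n - r + 1) + Nat.choose (r + d - 2) d =
        Nat.choose (n + d - 1) d) := by
  obtain ⟨e, rfl⟩ : ∃ e, d = e + 2 := ⟨d - 2, by omega⟩
  obtain ⟨s, rfl⟩ : ∃ s, r = s + 1 := ⟨r - 1, by omega⟩
  obtain ⟨m, rfl⟩ : ∃ m, n = s + 1 + m := ⟨n - (s + 1), by omega⟩
  have e1 : s + 1 + m + (e + 2) - 1 = s + m + e + 2 := by omega
  have e2 : s + 1 + m + (e + 2) - 2 = s + m + e + 1 := by omega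
  have e3 : e + 2 - 1 = e + 1 := by omega
  have e4 : s + 1 + m - (s + 1) + 1 = m + 1 := by omega
  have e5 : s + 1 + (e + 2) - 2 = s + e + 1 := by omega
  rw [e1, e2, e3, e4, e5]
  constructor
  · exact singleton_aux s e m
  · intro h
    obtain rfl : m = 0 := by omega
    have h : s + 0 + e + 2 = (s + e + 1) + 1 := by ring
    have h' : s + 0 + e + 1 = s + e + 1 := by ring
    have key : (s + e + 1 + 1).choose (e + 2) =
        (s + e + 1).choose (e + 1) + (s + e + 1).choose (e + 2) :=
      Nat.choose_succ_succ _ _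
    rw [h, h', key]
    omega
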